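/- Let I and J be disjoint finite subsets of L, let (p_M)_{M ∈ D_I} and (q_N)_{N ∈ D_J} be probability distributions, and set ρ_I = Σ_{M ∈ D_I} p_M |f_M⟩⟨f_M|, ρ_J = Σ_{N ∈ D_J} q_N |f_N⟩⟨f_N|, and ρ = Σ_{M ∈ D_I} Σ_{N ∈ D_J} p_M q_N |f_{MN}⟩⟨f_{MN}|, where MN denotes concatenation of the sequences M and N. Then Tr(ρ a) = Tr(ρ_I a) for all a ∈ A(I) and Tr(ρ b) = Tr(ρ_J b) for all b ∈ A(J). -/

import Mathlib

noncomputable section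
open scoped InnerProductSpace ComplexConjugate
open ContinuousLinearMap
open scoped symmDiff
set_option linter.unusedSectionVars false

namespace Fermion

variable (L : Type) [Fintype L] [LinearOrder L]

/-- The fermionic Fock space over the one-particle space `h = ℓ²(L)`, realized concretely
via its orthonormal basis indexed by the finite subsets of `L` (the vectors `f_M`). -/
abbrev FockSpace := EuclideanSpace ℂ (Finset L)

variable {L}

/-- The vacuum vector `Ψ = f_∅`. -/
def vac : FockSpace L := EuclideanSpace.single ∅ 1

/-- Jordan–Wigner sign factor. -/
def jwSign (l : L) (S : Finset L) : ℂ := (-1 : ℂ) ^ (S.filter (fun k => k < l)).card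

/-- The creation operator `a*_l = a*(e_l)`. -/
def cre (l : L) : FockSpace L →L[ℂ] FockSpace L :=
  LinearMap.toContinuousLinearMap <|
    (EuclideanSpace.basisFun (Finset L) ℂ).toBasis.constr ℂ fun S =>
      if l ∈ S then 0 else jwSign l S • EuclideanSpace.single (insert l S) 1

/-- The annihilation operator `a_l = a(e_l)`. -/
def ann (l : L) : FockSpace L →L[ℂ] FockSpace L := ContinuousLinearMap.adjoint (cre l)

/-- The vector `f_{(l_1,…,l_n)} = a*_{l_1} ⋯ a*_{l_n} Ψ  (= P (e_{l_1} ⊗ ⋯ ⊗ e_{l_n}))`. -/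
def fvec (M : List L) : FockSpace L := M.foldr (fun l v => cre l v) vac

/-- The algebra `A(I)` : the unital *-subalgebra of `B(H)` generated by `{a_l : l ∈ I}`. -/
def A (I : Finset L) : StarSubalgebra ℂ (FockSpace L →L[ℂ] FockSpace L) :=
  StarAlgebra.adjoin ℂ (ann '' (I : Set L))

/-- The trace on `B(H)`. -/
def Tr (T : FockSpace L →L[ℂ] FockSpace L) : ℂ := LinearMap.trace ℂ (FockSpace L) T

/-- The rank-one operator `|x⟩⟨y|`. -/
def ketbra (x y : FockSpace L) : FockSpace L →L[ℂ] FockSpace L :=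
  (ContinuousLinearMap.toSpanSingleton ℂ x).comp (innerSL ℂ y)

/-- A valid choice of `D_I`: `D S` enumerates the finite set `S` without repetitions. -/
def IsEnum (D : Finset L → List L) : Prop := ∀ S : Finset L, (D S).Nodup ∧ (D S).toFinset = S

/-- The entangled vector `Φ = Σ_{M ∈ D_I} p_M^{1/2} f_{M ι(M)}`. -/
def Phi (D : Finset L → List L) (p : Finset L → ℝ) (I : Finset L) (ι : L → L) : FockSpace L :=
  ∑ S ∈ I.powerset, (Real.sqrt (p S) : ℂ) • fvec (D S ++ (D S).map ι)

/-- The state `φ(x) = ⟨Φ, xΦ⟩`. -/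
def phi (D : Finset L → List L) (p : Finset L → ℝ) (I : Finset L) (ι : L → L)
    (x : FockSpace L →L[ℂ] FockSpace L) : ℂ :=
  ⟪Phi D p I ι, x (Phi D p I ι)⟫_ℂ

-- basis vector abbreviation
def es (S : Finset L) : FockSpace L := EuclideanSpace.single S 1

lemma cre_es (l : L) (S : Finset L) :
    cre l (es S) = if l ∈ S then 0 else jwSign l S • es (insert l S) := by
  have h : es S = (EuclideanSpace.basisFun (Finset L) ℂ).toBasis S := by
    simp [es, EuclideanSpace.basisFun_apply, OrthonormalBasis.coe_toBasis]
  rw [cre, h]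
  simp only [LinearMap.coe_toContinuousLinearMap', Module.Basis.constr_basis]
  rfl

lemma inner_es (S : Finset L) (v : FockSpace L) : ⟪es S, v⟫_ℂ = v S := by
  simp [es, EuclideanSpace.inner_single_left]

lemma inner_es_es (S T : Finset L) : ⟪es S, es T⟫_ℂ = if S = T then 1 else 0 := by
  rw [inner_es]
  simp [es, EuclideanSpace.single_apply, eq_comm]

lemma neg_one_pow_symmDiff (A B : Finset L) :
    (-1 : ℂ) ^ (A ∆ B).card = (-1) ^ A.card * (-1) ^ B.card := by
  have hA : (A \ B).card + (A ∩ B).card = A.card := Finset.card_sdiff_add_card_inter A B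
  have hB : (B \ A).card + (B ∩ A).card = B.card := Finset.card_sdiff_add_card_inter B A
  have hi : (B ∩ A).card = (A ∩ B).card := by rw [Finset.inter_comm]
  have hAB : (A ∆ B).card = (A \ B).card + (B \ A).card := by
    rw [symmDiff_def, Finset.sup_eq_union, Finset.card_union_of_disjoint disjoint_sdiff_sdiff]
  have key : A.card + B.card = (A ∆ B).card + 2 * (A ∩ B).card := by omega
  rw [← pow_add, key, pow_add, pow_mul, neg_one_sq, one_pow, mul_one]

lemma filter_symmDiff (p : L → Prop) [DecidablePred p] (A B : Finset L) :
    (A ∆ B).filter p = (A.filter p) ∆ (B.filter p) := by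
  ext x
  simp only [Finset.mem_filter, Finset.mem_symmDiff]
  tauto

lemma jwSign_symmDiff (l : L) (A B : Finset L) :
    jwSign l (A ∆ B) = jwSign l A * jwSign l B := by
  rw [jwSign, jwSign, jwSign, filter_symmDiff, neg_one_pow_symmDiff]

lemma jwSign_mul_self (l : L) (S : Finset L) : jwSign l S * jwSign l S = 1 := by
  rw [jwSign, ← mul_pow]; norm_num

lemma conj_jwSign (l : L) (S : Finset L) : conj (jwSign l S) = jwSign l S := by
  rw [jwSign, map_pow, map_neg, map_one]

/-- The phase of the Jordan–Wigner dressing. -/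
def eps (T S : Finset L) : ℂ := (-1) ^ ∑ s ∈ S, (T.filter (fun t => t < s)).card

lemma eps_mul_self (T S : Finset L) : eps T S * eps T S = 1 := by
  rw [eps, ← mul_pow]; norm_num

lemma conj_eps (T S : Finset L) : conj (eps T S) = eps T S := by
  rw [eps, map_pow, map_neg, map_one]

lemma eps_insert (T S : Finset L) (l : L) (hl : l ∉ S) :
    eps T (insert l S) = jwSign l T * eps T S := by
  rw [eps, eps, Finset.sum_insert hl, pow_add, jwSign]

/-- The Jordan–Wigner dressing operator `W_T : e_S ↦ ε(S,T) e_{S ∆ T}`. -/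
def W (T : Finset L) : FockSpace L →L[ℂ] FockSpace L :=
  LinearMap.toContinuousLinearMap <|
    (EuclideanSpace.basisFun (Finset L) ℂ).toBasis.constr ℂ fun S =>
      eps T S • EuclideanSpace.single (S ∆ T) 1

lemma W_es (T S : Finset L) : W T (es S) = eps T S • es (S ∆ T) := by
  have h : es S = (EuclideanSpace.basisFun (Finset L) ℂ).toBasis S := by
    simp [es, EuclideanSpace.basisFun_apply, OrthonormalBasis.coe_toBasis]
  rw [W, h]
  simp only [LinearMap.coe_toContinuousLinearMap', Module.Basis.constr_basis]
  rfl

lemma es_apply (S R : Finset L) : es S R = if R = S then 1 else 0 := by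
  simp [es, EuclideanSpace.single_apply]

lemma vec_ext {v w : FockSpace L} (h : ∀ S, ⟪es S, v⟫_ℂ = ⟪es S, w⟫_ℂ) : v = w := by
  apply PiLp.ext
  intro S
  have := h S
  rwa [inner_es, inner_es] at this

lemma adjoint_W_es (T S : Finset L) :
    ContinuousLinearMap.adjoint (W T) (es S) = eps T (S ∆ T) • es (S ∆ T) := by
  apply vec_ext
  intro R
  rw [ContinuousLinearMap.adjoint_inner_right, W_es, inner_smul_left, inner_smul_right,
    conj_eps, inner_es_es, inner_es_es]
  by_cases h : R ∆ T = S
  · have h2 : R = S ∆ T := by rw [← h, symmDiff_symmDiff_cancel_right]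
    simp [h, h2]
  · have h2 : ¬ (R = S ∆ T) := fun hc => h (by rw [hc, symmDiff_symmDiff_cancel_right])
    simp [h, h2]

lemma clm_ext_es {f g : FockSpace L →L[ℂ] FockSpace L} (h : ∀ S, f (es S) = g (es S)) :
    f = g := by
  apply ContinuousLinearMap.coe_injective
  apply Module.Basis.ext (EuclideanSpace.basisFun (Finset L) ℂ).toBasis
  intro S
  have hb : (EuclideanSpace.basisFun (Finset L) ℂ).toBasis S = es S := by
    simp [es, EuclideanSpace.basisFun_apply, OrthonormalBasis.coe_toBasis]
  simpa [hb] using h S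

lemma adjW_mul_W (T : Finset L) : ContinuousLinearMap.adjoint (W T) * W T = 1 := by
  apply clm_ext_es
  intro S
  rw [ContinuousLinearMap.mul_apply, W_es, map_smul, adjoint_W_es,
    symmDiff_symmDiff_cancel_right, smul_smul, mul_comm, eps_mul_self, one_smul,
    ContinuousLinearMap.one_apply]

lemma W_mul_adjW (T : Finset L) : W T * ContinuousLinearMap.adjoint (W T) = 1 := by
  apply clm_ext_es
  intro S
  rw [ContinuousLinearMap.mul_apply, adjoint_W_es, map_smul, W_es,
    symmDiff_symmDiff_cancel_right, smul_smul, eps_mul_self, one_smul,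
    ContinuousLinearMap.one_apply]

lemma cre_mul_W {l : L} {T : Finset L} (hl : l ∉ T) : cre l * W T = W T * cre l := by
  apply clm_ext_es
  intro S
  rw [ContinuousLinearMap.mul_apply, ContinuousLinearMap.mul_apply, W_es, map_smul, cre_es,
    cre_es]
  have hmem : l ∈ S ∆ T ↔ l ∈ S := by
    rw [Finset.mem_symmDiff]; tauto
  by_cases hS : l ∈ S
  · simp [hS, hmem.mpr hS]
  · have h1 : l ∉ S ∆ T := fun hc => hS (hmem.mp hc)
    have h2 : insert l (S ∆ T) = (insert l S) ∆ T := by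
      ext x
      by_cases hx : x = l
      · subst hx; simp [h1, Finset.mem_symmDiff, hS, hl]
      · simp only [Finset.mem_insert, Finset.mem_symmDiff, hx, false_or]
    simp only [hS, h1, if_neg, if_false, ite_false, map_smul, W_es, smul_smul]
    rw [h2, jwSign_symmDiff, eps_insert T S l hS]
    ring_nf

lemma comm_star_of_comm {M : Type*} [Monoid M] [StarMul M] {a w : M}
    (h1 : star w * w = 1) (h2 : w * star w = 1) (h : a * w = w * a) :
    star a * w = w * star a := by
  have h3 : star w * star a = star a * star w := by
    rw [← star_mul, h, star_mul]
  calc star a * w = (w * star w) * (star a * w) := by rw [h2, one_mul]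
    _ = w * ((star w * star a) * w) := by simp only [mul_assoc]
    _ = w * ((star a * star w) * w) := by rw [h3]
    _ = w * (star a * (star w * w)) := by simp only [mul_assoc]
    _ = w * star a := by rw [h1, mul_one]

lemma star_W_mul_W (T : Finset L) : star (W T) * W T = 1 := by
  rw [ContinuousLinearMap.star_eq_adjoint]; exact adjW_mul_W T

lemma W_mul_star_W (T : Finset L) : W T * star (W T) = 1 := by
  rw [ContinuousLinearMap.star_eq_adjoint]; exact W_mul_adjW T

lemma ann_mul_W {l : L} {T : Finset L} (hl : l ∉ T) : ann l * W T = W T * ann l := by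
  have : ann l = star (cre l) := rfl
  rw [this]
  exact comm_star_of_comm (star_W_mul_W T) (W_mul_star_W T) (cre_mul_W hl)

lemma A_comm_W {I T : Finset L} (hIT : ∀ l ∈ I, l ∉ T)
    {a : FockSpace L →L[ℂ] FockSpace L} (ha : a ∈ A I) : a * W T = W T * a := by
  induction ha using StarAlgebra.adjoin_induction with
  | mem x hx =>
    obtain ⟨l, hl, rfl⟩ := hx
    exact ann_mul_W (hIT l hl)
  | algebraMap r => exact (Algebra.commutes r (W T)).symm ▸ Algebra.commutes r (W T)
  | add x y hx hy ihx ihy => rw [add_mul, mul_add, ihx, ihy]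
  | mul x y hx hy ihx ihy => rw [mul_assoc, ihy, ← mul_assoc, ihx, mul_assoc]
  | star x hx ihx =>
    exact comm_star_of_comm (star_W_mul_W T) (W_mul_star_W T) ihx

lemma diag_reduce {I T : Finset L} (hIT : ∀ l ∈ I, l ∉ T)
    {a : FockSpace L →L[ℂ] FockSpace L} (ha : a ∈ A I)
    {S : Finset L} (hST : Disjoint S T) :
    ⟪es (S ∪ T), a (es (S ∪ T))⟫_ℂ = ⟪es S, a (es S)⟫_ℂ := by
  have hU : S ∆ T = S ∪ T := by
    rw [symmDiff_def, Finset.sup_eq_union, Finset.sdiff_eq_self_of_disjoint hST,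
      Finset.sdiff_eq_self_of_disjoint hST.symm]
  have hW : W T (es S) = eps T S • es (S ∪ T) := by rw [W_es, hU]
  have key : ⟪W T (es S), a (W T (es S))⟫_ℂ = ⟪es S, a (es S)⟫_ℂ := by
    have hcomm : a (W T (es S)) = W T (a (es S)) := by
      have := DFunLike.congr_fun (A_comm_W hIT ha) (es S)
      simpa [ContinuousLinearMap.mul_apply] using this
    have hWW : ∀ v : FockSpace L, ContinuousLinearMap.adjoint (W T) (W T v) = v := by
      intro v
      have := DFunLike.congr_fun (adjW_mul_W T) v
      simpa [ContinuousLinearMap.mul_apply] using this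
    rw [hcomm, ← ContinuousLinearMap.adjoint_inner_right, hWW]
  rw [hW] at key
  rw [inner_smul_left, map_smul, inner_smul_right, ← mul_assoc, conj_eps, eps_mul_self,
    one_mul] at key
  exact key

lemma Tr_eq (a : FockSpace L →L[ℂ] FockSpace L) : Tr a = ∑ S : Finset L, a (es S) S := by
  rw [Tr, LinearMap.trace_eq_matrix_trace ℂ (EuclideanSpace.basisFun (Finset L) ℂ).toBasis,
    Matrix.trace]
  apply Finset.sum_congr rfl
  intro S _
  rw [Matrix.diag_apply, LinearMap.toMatrix_apply]
  simp [OrthonormalBasis.coe_toBasis_repr_apply, EuclideanSpace.basisFun_repr,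
    OrthonormalBasis.coe_toBasis, EuclideanSpace.basisFun_apply, es]

lemma ketbra_apply (x y v : FockSpace L) : ketbra x y v = ⟪y, v⟫_ℂ • x := by
  rw [ketbra, ContinuousLinearMap.comp_apply, ContinuousLinearMap.toSpanSingleton_apply,
    innerSL_apply_apply]

lemma Tr_ketbra_es (U : Finset L) (y : FockSpace L) (a : FockSpace L →L[ℂ] FockSpace L) :
    Tr (ketbra (es U) y * a) = ⟪y, a (es U)⟫_ℂ := by
  rw [Tr_eq]
  rw [Finset.sum_eq_single U]
  · rw [ContinuousLinearMap.mul_apply, ketbra_apply, PiLp.smul_apply, es_apply,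
      if_pos rfl, smul_eq_mul, mul_one]
  · intro S _ hS
    rw [ContinuousLinearMap.mul_apply, ketbra_apply, PiLp.smul_apply, es_apply,
      if_neg hS, smul_eq_mul, mul_zero]
  · simp

lemma sum_component {ι : Type*} (s : Finset ι) (v : ι → FockSpace L) (S : Finset L) :
    (∑ i ∈ s, v i) S = ∑ i ∈ s, v i S :=
  by rw [WithLp.ofLp_sum, Finset.sum_apply]

lemma Tr_sum {ι : Type*} (s : Finset ι) (f : ι → (FockSpace L →L[ℂ] FockSpace L)) :
    Tr (∑ i ∈ s, f i) = ∑ i ∈ s, Tr (f i) := by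
  simp only [Tr_eq, ContinuousLinearMap.sum_apply, sum_component]
  rw [Finset.sum_comm]

lemma Tr_smul (c : ℂ) (f : FockSpace L →L[ℂ] FockSpace L) : Tr (c • f) = c * Tr f := by
  simp only [Tr_eq, ContinuousLinearMap.smul_apply, PiLp.smul_apply, smul_eq_mul,
    Finset.mul_sum]

lemma ketbra_smul_smul (c : ℂ) (x : FockSpace L) :
    ketbra (c • x) (c • x) = (c * conj c) • ketbra x x := by
  ext v
  rw [ContinuousLinearMap.smul_apply, ketbra_apply, ketbra_apply]
  simp only [inner_smul_left, smul_smul]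
  ring_nf

lemma fvec_nodup (M : List L) (hM : M.Nodup) :
    ∃ c : ℂ, c * conj c = 1 ∧ fvec M = c • es M.toFinset := by
  induction M with
  | nil => exact ⟨1, by simp, by simp [fvec, vac, es]⟩
  | cons l M ih =>
    rw [List.nodup_cons] at hM
    obtain ⟨c, hc, hf⟩ := ih hM.2
    have hl : l ∉ M.toFinset := by simpa using hM.1
    refine ⟨c * jwSign l M.toFinset, ?_, ?_⟩
    · rw [map_mul, conj_jwSign]
      calc c * jwSign l M.toFinset * (conj c * jwSign l M.toFinset)
          = (c * conj c) * (jwSign l M.toFinset * jwSign l M.toFinset) := by ring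
        _ = 1 := by rw [hc, jwSign_mul_self, one_mul]
    · have : fvec (l :: M) = cre l (fvec M) := rfl
      rw [this, hf, map_smul, cre_es, if_neg hl, List.toFinset_cons, smul_smul]

lemma ketbra_fvec (M : List L) (hM : M.Nodup) :
    ketbra (fvec M) (fvec M) = ketbra (es M.toFinset) (es M.toFinset) := by
  obtain ⟨c, hc, hf⟩ := fvec_nodup M hM
  rw [hf, ketbra_smul_smul, hc, one_smul]


set_option maxHeartbeats 2000000 in
theorem product_state_reduces'
    {L : Type} [Fintype L] [LinearOrder L]
    (I J : Finset L) (hIJ : Disjoint I J)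
    (D : Finset L → List L) (hD : ∀ S : Finset L, (D S).Nodup ∧ (D S).toFinset = S)
    (p q : Finset L → ℝ)
    (hp1 : ∑ S ∈ I.powerset, p S = 1)
    (hq1 : ∑ T ∈ J.powerset, q T = 1) :
    (∀ a ∈ A I,
      Tr ((∑ S ∈ I.powerset, ∑ T ∈ J.powerset,
            ((p S * q T : ℝ) : ℂ) • ketbra (fvec (D S ++ D T)) (fvec (D S ++ D T))) * a)
        = Tr ((∑ S ∈ I.powerset, ((p S : ℝ) : ℂ) • ketbra (fvec (D S)) (fvec (D S))) * a)) ∧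
    (∀ b ∈ A J,
      Tr ((∑ S ∈ I.powerset, ∑ T ∈ J.powerset,
            ((p S * q T : ℝ) : ℂ) • ketbra (fvec (D S ++ D T)) (fvec (D S ++ D T))) * b)
        = Tr ((∑ T ∈ J.powerset, ((q T : ℝ) : ℂ) • ketbra (fvec (D T)) (fvec (D T))) * b)) := by
  have hq1' : ∑ T ∈ J.powerset, ((q T : ℝ) : ℂ) = 1 := by
    rw [← Complex.ofReal_sum, hq1, Complex.ofReal_one]
  have hp1' : ∑ S ∈ I.powerset, ((p S : ℝ) : ℂ) = 1 := by
    rw [← Complex.ofReal_sum, hp1, Complex.ofReal_one]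
  -- the key identification of the double-sum state terms
  have hST : ∀ S ∈ I.powerset, ∀ T ∈ J.powerset,
      ketbra (fvec (D S ++ D T)) (fvec (D S ++ D T)) = ketbra (es (S ∪ T)) (es (S ∪ T)) := by
    intro S hS T hT
    rw [Finset.mem_powerset] at hS hT
    have hdisj : (D S).Disjoint (D T) := by
      intro l hlS hlT
      have h1 : l ∈ S := by rw [← (hD S).2]; exact List.mem_toFinset.mpr hlS
      have h2 : l ∈ T := by rw [← (hD T).2]; exact List.mem_toFinset.mpr hlT
      exact Finset.disjoint_left.mp hIJ (hS h1) (hT h2)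
    have hnd : (D S ++ D T).Nodup := List.Nodup.append (hD S).1 (hD T).1 hdisj
    have htf : (D S ++ D T).toFinset = S ∪ T := by
      rw [List.toFinset_append, (hD S).2, (hD T).2]
    rw [ketbra_fvec _ hnd, htf]
  have hSes : ∀ S : Finset L, ketbra (fvec (D S)) (fvec (D S)) = ketbra (es S) (es S) := by
    intro S
    rw [ketbra_fvec _ (hD S).1, (hD S).2]
  -- expand a trace of the double sum
  have hTrL : ∀ c : FockSpace L →L[ℂ] FockSpace L,
      Tr ((∑ S ∈ I.powerset, ∑ T ∈ J.powerset,
            ((p S * q T : ℝ) : ℂ) • ketbra (fvec (D S ++ D T)) (fvec (D S ++ D T))) * c)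
        = ∑ S ∈ I.powerset, ∑ T ∈ J.powerset,
            ((p S : ℝ) : ℂ) * ((q T : ℝ) : ℂ) * ⟪es (S ∪ T), c (es (S ∪ T))⟫_ℂ := by
    intro c
    rw [Finset.sum_mul, Tr_sum]
    apply Finset.sum_congr rfl
    intro S hS
    rw [Finset.sum_mul, Tr_sum]
    apply Finset.sum_congr rfl
    intro T hT
    rw [smul_mul_assoc, Tr_smul, hST S hS T hT, Tr_ketbra_es, Complex.ofReal_mul]
  constructor
  · intro a ha
    rw [hTrL a]
    have hred : ∀ S ∈ I.powerset, ∀ T ∈ J.powerset,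
        ⟪es (S ∪ T), a (es (S ∪ T))⟫_ℂ = ⟪es S, a (es S)⟫_ℂ := by
      intro S hS T hT
      rw [Finset.mem_powerset] at hS hT
      exact diag_reduce (fun l hl hlT => Finset.disjoint_left.mp hIJ hl (hT hlT)) ha
        (Finset.disjoint_of_subset_left hS (Finset.disjoint_of_subset_right hT hIJ))
    calc ∑ S ∈ I.powerset, ∑ T ∈ J.powerset,
            ((p S : ℝ) : ℂ) * ((q T : ℝ) : ℂ) * ⟪es (S ∪ T), a (es (S ∪ T))⟫_ℂ
        = ∑ S ∈ I.powerset, ((p S : ℝ) : ℂ) * ⟪es S, a (es S)⟫_ℂ := by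
          apply Finset.sum_congr rfl
          intro S hS
          rw [show ∑ T ∈ J.powerset, ((p S : ℝ) : ℂ) * ((q T : ℝ) : ℂ)
                * ⟪es (S ∪ T), a (es (S ∪ T))⟫_ℂ
              = (((p S : ℝ) : ℂ) * ⟪es S, a (es S)⟫_ℂ) * ∑ T ∈ J.powerset, ((q T : ℝ) : ℂ) from ?_,
            hq1', mul_one]
          rw [Finset.mul_sum]
          apply Finset.sum_congr rfl
          intro T hT
          rw [hred S hS T hT]
          ring
      _ = Tr ((∑ S ∈ I.powerset, ((p S : ℝ) : ℂ) • ketbra (fvec (D S)) (fvec (D S))) * a) := by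
          rw [Finset.sum_mul, Tr_sum]
          apply Finset.sum_congr rfl
          intro S hS
          rw [smul_mul_assoc, Tr_smul, hSes S, Tr_ketbra_es]
  · intro b hb
    rw [hTrL b]
    have hred : ∀ S ∈ I.powerset, ∀ T ∈ J.powerset,
        ⟪es (S ∪ T), b (es (S ∪ T))⟫_ℂ = ⟪es T, b (es T)⟫_ℂ := by
      intro S hS T hT
      rw [Finset.mem_powerset] at hS hT
      rw [Finset.union_comm]
      exact diag_reduce (fun l hl hlS => Finset.disjoint_left.mp hIJ (hS hlS) hl) hb
        (Finset.disjoint_of_subset_left hT (Finset.disjoint_of_subset_right hS hIJ.symm))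
    calc ∑ S ∈ I.powerset, ∑ T ∈ J.powerset,
            ((p S : ℝ) : ℂ) * ((q T : ℝ) : ℂ) * ⟪es (S ∪ T), b (es (S ∪ T))⟫_ℂ
        = ∑ T ∈ J.powerset, ((q T : ℝ) : ℂ) * ⟪es T, b (es T)⟫_ℂ := by
          rw [Finset.sum_comm]
          apply Finset.sum_congr rfl
          intro T hT
          rw [show ∑ S ∈ I.powerset, ((p S : ℝ) : ℂ) * ((q T : ℝ) : ℂ)
                * ⟪es (S ∪ T), b (es (S ∪ T))⟫_ℂ
              = (((q T : ℝ) : ℂ) * ⟪es T, b (es T)⟫_ℂ) * ∑ S ∈ I.powerset, ((p S : ℝ) : ℂ) from ?_,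
            hp1', mul_one]
          rw [Finset.mul_sum]
          apply Finset.sum_congr rfl
          intro S hS
          rw [hred S hS T hT]
          ring
      _ = Tr ((∑ T ∈ J.powerset, ((q T : ℝ) : ℂ) • ketbra (fvec (D T)) (fvec (D T))) * b) := by
          rw [Finset.sum_mul, Tr_sum]
          apply Finset.sum_congr rfl
          intro T hT
          rw [smul_mul_assoc, Tr_smul, hSes T, Tr_ketbra_es]

/-- Let `I` and `J` be disjoint finite subsets of `L`, let `(p_M)_{M ∈ D_I}`
and `(q_N)_{N ∈ D_J}` be probability distributions, and set
`ρ_I = Σ_{M ∈ D_I} p_M |f_M⟩⟨f_M|`, `ρ_J = Σ_{N ∈ D_J} q_N |f_N⟩⟨f_N|` and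
`ρ = Σ_{M ∈ D_I} Σ_{N ∈ D_J} p_M q_N |f_{MN}⟩⟨f_{MN}|` (`MN` the concatenation).
Then `Tr(ρ a) = Tr(ρ_I a)` for all `a ∈ A(I)` and `Tr(ρ b) = Tr(ρ_J b)` for all `b ∈ A(J)`. -/
theorem product_state_reduces
    {L : Type} [Fintype L] [LinearOrder L]
    (I J : Finset L) (hIJ : Disjoint I J)
    (D : Finset L → List L) (hD : IsEnum D)
    (p q : Finset L → ℝ)
    (hp0 : ∀ S ∈ I.powerset, 0 ≤ p S) (hp1 : ∑ S ∈ I.powerset, p S = 1)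
    (hq0 : ∀ T ∈ J.powerset, 0 ≤ q T) (hq1 : ∑ T ∈ J.powerset, q T = 1) :
    (∀ a ∈ A I,
      Tr ((∑ S ∈ I.powerset, ∑ T ∈ J.powerset,
            ((p S * q T : ℝ) : ℂ) • ketbra (fvec (D S ++ D T)) (fvec (D S ++ D T))) * a)
        = Tr ((∑ S ∈ I.powerset, ((p S : ℝ) : ℂ) • ketbra (fvec (D S)) (fvec (D S))) * a)) ∧
    (∀ b ∈ A J,
      Tr ((∑ S ∈ I.powerset, ∑ T ∈ J.powerset,
            ((p S * q T : ℝ) : ℂ) • ketbra (fvec (D S ++ D T)) (fvec (D S ++ D T))) * b)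
        = Tr ((∑ T ∈ J.powerset, ((q T : ℝ) : ℂ) • ketbra (fvec (D T)) (fvec (D T))) * b)) := by
  exact product_state_reduces' I J hIJ D hD p q hp1 hq1

end Fermion
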